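/- arXiv:1507.05290 — 2 statements merged into one kernel-verified Lean document; each statement's English description precedes it below -/
import Mathlib

section
/- Let Y be a symmetric real 3×3 matrix with eigenvalues λ₁ ≥ λ₂ ≥ λ₃, put Z = Y − λ₂·I with eigenvalues λ₁' = λ₁ − λ₂, 0, λ₃' = λ₃ − λ₂. If λ₁' ≠ λ₃', then with e₂(x) = (exp(x) − 1 − x)/x² (extended by e₂(0) = 1/2), b = 1 − λ₁'λ₃'(e₂(λ₁') − e₂(λ₃'))/(λ₁' − λ₃'), and c = 1/2 + (λ₁'(2e₂(λ₁') − 1) − λ₃'(2e₂(λ₃') − 1))/(2(λ₁' − λ₃')), one has exp(Y) = exp(λ₂)·(I + b·Z + c·Z²). -/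
open Matrix Polynomial
open Nat

noncomputable def e2 (x : ℝ) : ℝ := if x = 0 then 1/2 else (Real.exp x - 1 - x) / x ^ 2

lemma sumfac1 (x : ℝ) : Summable (fun n : ℕ => x ^ n / ((n + 1)! : ℝ)) := by
  refine Summable.of_norm_bounded (Real.summable_pow_div_factorial |x|) ?_
  intro n
  rw [norm_div, norm_pow, Real.norm_eq_abs, Real.norm_eq_abs, Nat.abs_cast]
  apply div_le_div_of_nonneg_left ?_ ?_ ?_ |>.trans_eq rfl
  · positivity
  · exact_mod_cast Nat.factorial_pos n
  · exact_mod_cast Nat.factorial_le (Nat.le_succ n)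

lemma sumfac2 (x : ℝ) : Summable (fun n : ℕ => x ^ n / ((n + 2)! : ℝ)) := by
  refine Summable.of_norm_bounded (Real.summable_pow_div_factorial |x|) ?_
  intro n
  rw [norm_div, norm_pow, Real.norm_eq_abs, Real.norm_eq_abs, Nat.abs_cast]
  apply div_le_div_of_nonneg_left ?_ ?_ ?_ |>.trans_eq rfl
  · positivity
  · exact_mod_cast Nat.factorial_pos n
  · exact_mod_cast Nat.factorial_le (by omega : n ≤ n + 2)

lemma exp_expand (x : ℝ) :
    Real.exp x = 1 + x + x ^ 2 * ∑' n : ℕ, x ^ n / ((n + 2)! : ℝ) := by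
  have h0 : Real.exp x = ∑' n : ℕ, x ^ n / (n ! : ℝ) := by
    rw [Real.exp_eq_exp_ℝ, NormedSpace.exp_eq_tsum_div]
  have hs : Summable (fun n : ℕ => x ^ n / (n ! : ℝ)) := Real.summable_pow_div_factorial x
  have hs1 : Summable (fun n : ℕ => x ^ (n + 1) / ((n + 1)! : ℝ)) :=
    (summable_nat_add_iff 1).2 hs
  rw [h0, Summable.tsum_eq_zero_add hs, Summable.tsum_eq_zero_add hs1]
  have : ∀ n : ℕ, x ^ (n + 1 + 1) / ((n + 1 + 1)! : ℝ) = x ^ 2 * (x ^ n / ((n + 2)! : ℝ)) := by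
    intro n
    rw [show n + 1 + 1 = n + 2 from rfl, pow_add]
    ring
  rw [tsum_congr this, tsum_mul_left]
  simp [Nat.factorial]
  ring

lemma tsum2 (x : ℝ) : ∑' n : ℕ, x ^ n / ((n + 2)! : ℝ) = e2 x := by
  rcases eq_or_ne x 0 with rfl | hx
  · rw [e2, if_pos rfl]
    rw [tsum_eq_single 0 (by intro n hn; simp [zero_pow hn])]
    norm_num [Nat.factorial]
  · rw [e2, if_neg hx]
    have := exp_expand x
    field_simp
    linarith [this]

lemma tsum1 (x : ℝ) : ∑' n : ℕ, x ^ n / ((n + 1)! : ℝ) = x * e2 x + 1 := by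
  rcases eq_or_ne x 0 with rfl | hx
  · rw [tsum_eq_single 0 (by intro n hn; simp [zero_pow hn])]
    norm_num [Nat.factorial]
  · have h0 : Real.exp x = ∑' n : ℕ, x ^ n / (n ! : ℝ) := by
      rw [Real.exp_eq_exp_ℝ, NormedSpace.exp_eq_tsum_div]
    have hs : Summable (fun n : ℕ => x ^ n / (n ! : ℝ)) := Real.summable_pow_div_factorial x
    rw [Summable.tsum_eq_zero_add hs] at h0
    have : ∀ n : ℕ, x ^ (n + 1) / ((n + 1)! : ℝ) = x * (x ^ n / ((n + 1)! : ℝ)) := by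
      intro n; rw [pow_succ]; ring
    rw [tsum_congr this, tsum_mul_left] at h0
    have he : e2 x = (Real.exp x - 1 - x) / x ^ 2 := by rw [e2, if_neg hx]
    simp only [pow_zero, Nat.factorial_zero, Nat.cast_one, div_one] at h0
    rw [he, h0]
    field_simp
    ring

theorem exp_sym3_closed_formula (Y : Matrix (Fin 3) (Fin 3) ℝ) (hY : Yᵀ = Y)
    (l1 l2 l3 : ℝ) (hord : l1 ≥ l2 ∧ l2 ≥ l3)
    (hchar : Y.charpoly = (X - C l1) * (X - C l2) * (X - C l3))
    (Z : Matrix (Fin 3) (Fin 3) ℝ) (hZ : Z = Y - l2 • (1 : Matrix (Fin 3) (Fin 3) ℝ))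
    (l1' l3' : ℝ) (h1 : l1' = l1 - l2) (h3 : l3' = l3 - l2) (hne : l1' ≠ l3')
    (b c : ℝ)
    (hb : b = 1 - l1' * l3' * (e2 l1' - e2 l3') / (l1' - l3'))
    (hc : c = 1/2 + (l1' * (2 * e2 l1' - 1) - l3' * (2 * e2 l3' - 1)) / (2 * (l1' - l3'))) :
    NormedSpace.exp Y =
      Real.exp l2 • ((1 : Matrix (Fin 3) (Fin 3) ℝ) + b • Z + c • Z ^ 2) := by
  have hΔ : l1' - l3' ≠ 0 := sub_ne_zero.mpr hne
  have hY2 : Y = Z + l2 • (1 : Matrix (Fin 3) (Fin 3) ℝ) := by rw [hZ]; abel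
  have h0 : (Y - l1 • 1) * (Y - l2 • 1) * (Y - l3 • 1) = (0 : Matrix (Fin 3) (Fin 3) ℝ) := by
    have h := Matrix.aeval_self_charpoly Y
    rw [hchar] at h
    simpa [Algebra.algebraMap_eq_smul_one] using h
  have hCH : Z ^ 3 = (l1' + l3') • Z ^ 2 - (l1' * l3') • Z := by
    have e1 : Y - l1 • (1 : Matrix (Fin 3) (Fin 3) ℝ) = Z - l1' • 1 := by
      rw [hZ, h1, sub_smul]; abel
    have e2' : Y - l2 • (1 : Matrix (Fin 3) (Fin 3) ℝ) = Z := hZ.symm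
    have e3 : Y - l3 • (1 : Matrix (Fin 3) (Fin 3) ℝ) = Z - l3' • 1 := by
      rw [hZ, h3, sub_smul]; abel
    rw [e1, e2', e3] at h0
    have expand : (Z - l1' • 1) * Z * (Z - l3' • 1)
        = Z ^ 3 - (l1' + l3') • Z ^ 2 + (l1' * l3') • Z := by
      simp only [sub_mul, mul_sub, smul_mul_assoc, mul_smul_comm, one_mul, mul_one,
        smul_smul, add_smul, pow_succ, pow_zero, mul_assoc]
      module
    rw [expand] at h0
    refine eq_of_sub_eq_zero ?_
    rw [← h0]; abel
  set p : ℝ := l1' * l3' with hp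
  set s : ℝ := l1' + l3' with hs
  set β : ℕ → ℝ := fun n => (l1' ^ n - l3' ^ n) / (l1' - l3') with hβdef
  set α : ℕ → ℝ := fun n => Nat.casesOn n (1 : ℝ) (fun m => -p * β m) with hαdef
  have hβ0 : β 0 = 0 := by simp [hβdef]
  have hβ1 : β 1 = 1 := by rw [hβdef]; field_simp
  have hα0 : α 0 = 1 := rfl
  have hαs : ∀ n, α (n + 1) = -p * β n := fun n => rfl
  have hβrec : ∀ n, β (n + 1) = α n + s * β n := by
    intro n
    cases n with
    | zero => rw [hβ1, hα0, hβ0]; ring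
    | succ m =>
      rw [hαs, hβdef, hp, hs]
      simp only
      field_simp
      ring
  have hpow : ∀ n, Z ^ (n + 1) = α n • Z + β n • Z ^ 2 := by
    intro n
    induction n with
    | zero => rw [hα0, hβ0]; simp
    | succ m ih =>
      rw [pow_succ, ih, add_mul, smul_mul_assoc, smul_mul_assoc,
        show Z ^ 2 * Z = Z ^ 3 from (pow_succ Z 2).symm,
        show Z * Z = Z ^ 2 from (sq Z).symm, hCH, hαs, hβrec]
      module
  -- summability and sums of the coefficient series
  have hβeq1 : (fun n => β n / ((n + 1)! : ℝ))
      = fun n => (l1' ^ n / ((n + 1)! : ℝ) - l3' ^ n / ((n + 1)! : ℝ)) * (l1' - l3')⁻¹ := by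
    funext n; rw [hβdef]; ring
  have hβeq2 : (fun n => β n / ((n + 2)! : ℝ))
      = fun n => (l1' ^ n / ((n + 2)! : ℝ) - l3' ^ n / ((n + 2)! : ℝ)) * (l1' - l3')⁻¹ := by
    funext n; rw [hβdef]; ring
  have hβsum1 : Summable (fun n => β n / ((n + 1)! : ℝ)) := by
    rw [hβeq1]; exact ((sumfac1 l1').sub (sumfac1 l3')).mul_right _
  have hβsum2 : Summable (fun n => β n / ((n + 2)! : ℝ)) := by
    rw [hβeq2]; exact ((sumfac2 l1').sub (sumfac2 l3')).mul_right _
  have hβt2 : ∑' n : ℕ, β n / ((n + 2)! : ℝ) = (e2 l1' - e2 l3') * (l1' - l3')⁻¹ := by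
    rw [hβeq2, tsum_mul_right, Summable.tsum_sub (sumfac2 l1') (sumfac2 l3'), tsum2, tsum2]
  have hβt1 : ∑' n : ℕ, β n / ((n + 1)! : ℝ) = c := by
    rw [hβeq1, tsum_mul_right, Summable.tsum_sub (sumfac1 l1') (sumfac1 l3'), tsum1, tsum1, hc]
    field_simp
    ring
  have hαeq : (fun n => α (n + 1) / ((n + 1 + 1)! : ℝ))
      = fun n => β n / ((n + 2)! : ℝ) * (-p) := by
    funext n; rw [hαs]; ring
  have hαsum : Summable (fun n => α n / ((n + 1)! : ℝ)) := by
    refine (summable_nat_add_iff 1).1 ?_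
    rw [hαeq]
    exact hβsum2.mul_right _
  have hαt : ∑' n : ℕ, α n / ((n + 1)! : ℝ) = b := by
    rw [Summable.tsum_eq_zero_add hαsum, hαeq, tsum_mul_right, hβt2, hα0, hb]
    norm_num [Nat.factorial]
    ring
  -- matrix exponential computations
  have hsumm : Summable (fun n : ℕ => ((n ! : ℝ))⁻¹ • Z ^ n) := by
    letI : SeminormedRing (Matrix (Fin 3) (Fin 3) ℝ) := Matrix.linftyOpSemiNormedRing
    letI : NormedRing (Matrix (Fin 3) (Fin 3) ℝ) := Matrix.linftyOpNormedRing
    letI : NormedAlgebra ℝ (Matrix (Fin 3) (Fin 3) ℝ) := Matrix.linftyOpNormedAlgebra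
    exact NormedSpace.expSeries_summable' (𝕂 := ℝ) Z
  have hexpZ : NormedSpace.exp Z = 1 + b • Z + c • Z ^ 2 := by
    rw [congrFun (NormedSpace.exp_eq_tsum (𝕂 := ℝ)) Z, Summable.tsum_eq_zero_add hsumm]
    have hterm : ∀ n : ℕ, (((n + 1)! : ℝ))⁻¹ • Z ^ (n + 1)
        = (α n / ((n + 1)! : ℝ)) • Z + (β n / ((n + 1)! : ℝ)) • Z ^ 2 := by
      intro n
      rw [hpow n, smul_add, smul_smul, smul_smul, div_eq_inv_mul, div_eq_inv_mul]
    rw [tsum_congr hterm, Summable.tsum_add (hαsum.smul_const _) (hβsum1.smul_const _),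
      Summable.tsum_smul_const hαsum, Summable.tsum_smul_const hβsum1, hαt, hβt1]
    norm_num [Nat.factorial]
    abel
  have hcomm : Commute Z (l2 • (1 : Matrix (Fin 3) (Fin 3) ℝ)) :=
    (Commute.one_right Z).smul_right l2
  have hexp1 : NormedSpace.exp (l2 • (1 : Matrix (Fin 3) (Fin 3) ℝ))
      = Real.exp l2 • (1 : Matrix (Fin 3) (Fin 3) ℝ) := by
    have hpi : NormedSpace.exp (fun _ : Fin 3 => l2) = fun _ : Fin 3 => Real.exp l2 := by
      funext i
      rw [Pi.coe_exp, ← Real.exp_eq_exp_ℝ]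
    rw [Matrix.smul_one_eq_diagonal, Matrix.exp_diagonal, hpi, ← Matrix.smul_one_eq_diagonal]
  rw [hY2, Matrix.exp_add_of_commute Z (l2 • 1) hcomm, hexp1, hexpZ, mul_smul_comm, mul_one]
end

section
/- For a rotation matrix R ∈ SO(3) with tr(R) ≠ −1 and R ≠ I, setting θ = arccos((tr R − 1)/2) ∈ (0, π), the matrix X = (θ/(2 sin θ))·(R − Rᵀ) is antisymmetric and satisfies exp(X) = R. -/
open Matrix

private lemma adj_id3 (A : Matrix (Fin 3) (Fin 3) ℝ) :
    adjugate A = A*A - A.trace • A + (adjugate A).trace • 1 := by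
  ext i j
  fin_cases i <;> fin_cases j <;>
    simp [adjugate_fin_three, mul_apply, Fin.sum_univ_three, trace_fin_three,
      Matrix.one_apply] <;> ring

theorem inverse_rodrigues (R : Matrix (Fin 3) (Fin 3) ℝ)
    (hR : Rᵀ * R = 1) (hdet : R.det = 1) (htr : R.trace ≠ -1) (hne : R ≠ 1)
    (θ : ℝ) (hθ : θ = Real.arccos ((R.trace - 1) / 2))
    (X : Matrix (Fin 3) (Fin 3) ℝ) (hX : X = (θ / (2 * Real.sin θ)) • (R - Rᵀ)) :
    Xᵀ = -X ∧ NormedSpace.exp X = R := by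
  set t : ℝ := R.trace with htdef
  set S : Matrix (Fin 3) (Fin 3) ℝ := R - Rᵀ with hSdef
  have hR' : R * Rᵀ = 1 := mul_eq_one_comm.mp hR
  have hadj : adjugate R = Rᵀ := by
    have h1 := Matrix.mul_adjugate R
    rw [hdet, one_smul] at h1
    calc adjugate R = (Rᵀ * R) * adjugate R := by rw [hR, one_mul]
      _ = Rᵀ * (R * adjugate R) := by rw [Matrix.mul_assoc]
      _ = Rᵀ := by rw [h1, mul_one]
  have key : Rᵀ = R*R - t • R + t • 1 := by
    have h := adj_id3 R
    rwa [hadj, trace_transpose, ← htdef] at h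
  have hRR : R*R = Rᵀ + t • R - t • 1 := by rw [key]; module
  have hTT : Rᵀ*Rᵀ = R + t • Rᵀ - t • 1 := by
    have h := congrArg Matrix.transpose hRR
    simpa [transpose_mul, transpose_smul, transpose_sub, transpose_add,
      transpose_one, transpose_transpose] using h
  have hSS : S*S = (t+1) • (R+Rᵀ) - (2*(t+1)) • 1 := by
    calc S*S = (R*R - R*Rᵀ) - (Rᵀ*R - Rᵀ*Rᵀ) := by
          rw [hSdef, sub_mul, mul_sub, mul_sub]
      _ = _ := by rw [hRR, hTT, hR, hR']; module
  have hplus : (R+Rᵀ)*S = (t-1) • S := by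
    calc (R+Rᵀ)*S = (R*R - R*Rᵀ) + (Rᵀ*R - Rᵀ*Rᵀ) := by
          rw [hSdef, add_mul, mul_sub, mul_sub]
      _ = _ := by rw [hRR, hTT, hR, hR', hSdef]; module
  have hS3 : S*S*S = ((t+1)*(t-3)) • S := by
    calc S*S*S = ((t+1) • (R+Rᵀ) - (2*(t+1)) • 1) * S := by rw [hSS]
      _ = (t+1) • ((R+Rᵀ)*S) - (2*(t+1)) • (1*S) := by
          rw [sub_mul, smul_mul_assoc, smul_mul_assoc]
      _ = _ := by rw [hplus, one_mul]; module
  have hSanti : Sᵀ = -S := by rw [hSdef]; simp [transpose_sub]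
  have htrS2 : trace (S*S) = 2*(t+1)*(t-3) := by
    rw [hSS]
    simp [trace_sub, trace_smul, trace_add, trace_transpose, trace_one, ← htdef]
    ring
  have hfro : trace (Sᵀ * S) = ∑ j : Fin 3, ∑ i : Fin 3, (S i j)^2 := by
    simp [Matrix.trace, Matrix.mul_apply, Matrix.diag, sq]
  have hsumsq : ∑ j : Fin 3, ∑ i : Fin 3, (S i j)^2 = -(2*(t+1)*(t-3)) := by
    rw [← hfro, hSanti, neg_mul, trace_neg, htrS2]
  have hquad : (t+1)*(t-3) ≤ 0 := by
    nlinarith [Finset.sum_nonneg (fun j (_ : j ∈ (Finset.univ : Finset (Fin 3))) =>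
      Finset.sum_nonneg (fun i (_ : i ∈ (Finset.univ : Finset (Fin 3))) => sq_nonneg (S i j)))]
  have ht3 : t ≠ 3 := by
    intro h3
    have hzero : ∑ j : Fin 3, ∑ i : Fin 3, (S i j)^2 = 0 := by rw [hsumsq, h3]; ring
    have hS0 : S = 0 := by
      ext i j
      have h1 := (Finset.sum_eq_zero_iff_of_nonneg (fun j _ =>
        Finset.sum_nonneg (fun i _ => sq_nonneg (S i j)))).mp hzero j (Finset.mem_univ j)
      have h2 := (Finset.sum_eq_zero_iff_of_nonneg (fun i _ => sq_nonneg (S i j))).mp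
        h1 i (Finset.mem_univ i)
      simpa using pow_eq_zero_iff (n := 2) (by norm_num) |>.mp h2
    have hsym : Rᵀ = R := by
      have h := sub_eq_zero.mp (hSdef ▸ hS0 : R - Rᵀ = 0)
      exact h.symm
    have hRsq : R * R = 1 := by rw [hsym] at hR; exact hR
    have hkey3 : R = R*R - (3:ℝ) • R + (3:ℝ) • 1 := by
      have h := key; rw [hsym, h3] at h; exact h
    have h4 : (4:ℝ) • R = (4:ℝ) • (1 : Matrix (Fin 3) (Fin 3) ℝ) := by
      calc (4:ℝ) • R = R + (3:ℝ) • R := by module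
        _ = (R*R - (3:ℝ) • R + (3:ℝ) • 1) + (3:ℝ) • R := by rw [← hkey3]
        _ = R*R + (3:ℝ) • 1 := by module
        _ = (4:ℝ) • 1 := by rw [hRsq]; module
    exact hne (smul_right_injective _ (by norm_num : (4:ℝ) ≠ 0) h4)
  have htm1 : -1 < t := by
    rcases lt_or_gt_of_ne htr with h | h
    · nlinarith
    · exact h
  have htlt3 : t < 3 := lt_of_le_of_ne (by nlinarith) ht3
  have hc1 : -1 ≤ (t-1)/2 := by linarith
  have hc2 : (t-1)/2 ≤ 1 := by linarith
  have hcos : Real.cos θ = (t-1)/2 := by rw [hθ]; exact Real.cos_arccos hc1 hc2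
  have hθpos : 0 < θ := by rw [hθ]; exact Real.arccos_pos.mpr (by linarith)
  have hθpi : θ < Real.pi := by
    rw [hθ]
    refine lt_of_le_of_ne (Real.arccos_le_pi _) fun h => ?_
    have := Real.arccos_eq_pi.mp h
    linarith
  have hspos : 0 < Real.sin θ := Real.sin_pos_of_pos_of_lt_pi hθpos hθpi
  set s : ℝ := Real.sin θ with hsdef
  have hsne : s ≠ 0 := ne_of_gt hspos
  have hs2 : s^2 = 1 - Real.cos θ^2 := by
    have h := Real.sin_sq_add_cos_sq θ; rw [← hsdef] at h; linarith
  have hs4 : 4*s^2 = (t+1)*(3-t) := by rw [hs2, hcos]; ring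
  have ht1ne : t + 1 ≠ 0 := by intro h; apply htr; linarith
  have ht3ne : (3:ℝ) - t ≠ 0 := by intro h; apply ht3; linarith
  have hXT : Xᵀ = -X := by
    rw [hX, transpose_smul, transpose_sub, transpose_transpose, ← smul_neg, neg_sub]
  refine ⟨hXT, ?_⟩
  have hX' : X = (θ / (2*s)) • S := by rw [hX, hSdef, hsdef]
  have hXsq : X^2 = (θ^2/(4*s^2)) • (S*S) := by
    rw [hX', pow_two, smul_mul_smul_comm]
    congr 1
    field_simp; ring
  have hX3 : X^3 = (-(θ^2)) • X := by
    rw [hX', smul_pow, show S^3 = S*S*S by rw [pow_succ, pow_two], hS3, smul_smul, smul_smul]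
    congr 1
    have h4s : (t+1)*(t-3) = -(4*s^2) := by rw [hs4]; ring
    rw [h4s]
    field_simp; ring
  have hodd : ∀ k : ℕ, X^(2*k+1) = ((-1:ℝ)^k * θ^(2*k)) • X := by
    intro k
    induction k with
    | zero => simp
    | succ k ih =>
      have e : 2*(k+1)+1 = (2*k+1) + 2 := by ring
      rw [e, pow_add, ih, smul_mul_assoc, ← pow_succ', show (2:ℕ)+1 = 3 from rfl, hX3,
        smul_smul]
      congr 1
      ring
  have heven : ∀ k : ℕ, X^(2*k+2) = ((-1:ℝ)^k * θ^(2*k)) • X^2 := by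
    intro k
    have e : 2*k+2 = (2*k+1) + 1 := by ring
    rw [e, pow_succ, hodd k, smul_mul_assoc, ← pow_two]
  -- the exponential series
  have hexp : NormedSpace.exp X = ∑' n : ℕ, ((n.factorial : ℝ))⁻¹ • X^n := by
    rw [NormedSpace.exp_eq_tsum (𝕂 := ℝ)]
  have hoddsum : HasSum (fun k : ℕ => ((((2*k+1).factorial : ℝ))⁻¹ • X^(2*k+1)))
      ((2⁻¹ : ℝ) • S) := by
    have h := (Real.hasSum_sin θ).smul_const ((2*s)⁻¹ • S)
    have he : (fun k : ℕ => ((-1:ℝ)^k * θ^(2*k+1) / ((2*k+1).factorial : ℝ)) • (2*s)⁻¹ • S)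
        = fun k : ℕ => ((((2*k+1).factorial : ℝ))⁻¹ • X^(2*k+1)) := by
      funext k
      rw [hodd k, hX', smul_smul, smul_smul, smul_smul]
      congr 1
      ring
    rw [he] at h
    have hval : Real.sin θ • ((2*s)⁻¹ • S) = (2⁻¹ : ℝ) • S := by
      rw [smul_smul, ← hsdef]
      congr 1
      field_simp
    rw [hval] at h
    exact h
  have hevensum : HasSum (fun k : ℕ => ((((2*k).factorial : ℝ))⁻¹ • X^(2*k)))
      (1 + ((1 - Real.cos θ) * (θ^2)⁻¹) • X^2) := by
    have hcs := Real.hasSum_cos θ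
    have hshift : HasSum (fun n : ℕ => ((-1:ℝ)^(n+1) * θ^(2*(n+1)) / ((2*(n+1)).factorial : ℝ)))
        (Real.cos θ - 1) := by
      rw [hasSum_nat_add_iff (f := fun n : ℕ => ((-1:ℝ)^n * θ^(2*n) / ((2*n).factorial : ℝ))) 1]
      simpa using hcs
    have h := hshift.neg.smul_const ((θ^2)⁻¹ • X^2)
    have he : (fun n : ℕ => (-((-1:ℝ)^(n+1) * θ^(2*(n+1)) / ((2*(n+1)).factorial : ℝ))) • (θ^2)⁻¹ • X^2)
        = fun k : ℕ => ((((2*(k+1)).factorial : ℝ))⁻¹ • X^(2*(k+1))) := by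
      funext k
      have e : 2*(k+1) = 2*k+2 := by ring
      rw [e, heven k, smul_smul, smul_smul]
      congr 1
      have hθne : θ ≠ 0 := ne_of_gt hθpos
      field_simp
      ring
    rw [he] at h
    have h2 : HasSum (fun k : ℕ => ((((2*k).factorial : ℝ))⁻¹ • X^(2*k)))
        ((-(Real.cos θ - 1)) • (θ^2)⁻¹ • X^2 + (((0).factorial : ℝ))⁻¹ • X^(2*0)) := by
      have := (hasSum_nat_add_iff (f := fun k : ℕ => ((((2*k).factorial : ℝ))⁻¹ • X^(2*k))) 1).mp
        (by convert h using 2 with k)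
      simpa [Finset.range_one] using this
    convert h2 using 1
    simp [smul_smul]
    module
  have htotal : HasSum (fun n : ℕ => ((n.factorial : ℝ))⁻¹ • X^n)
      ((1 + ((1 - Real.cos θ) * (θ^2)⁻¹) • X^2) + (2⁻¹ : ℝ) • S) :=
    HasSum.even_add_odd hevensum hoddsum
  rw [hexp, htotal.tsum_eq]
  -- final algebraic identity
  have hc : Real.cos θ = (t-1)/2 := hcos
  rw [hXsq, hc, smul_smul, hSS]
  have hcoef : (1 - (t-1)/2) * (θ^2)⁻¹ * (θ^2/(4*s^2)) = (2*(t+1))⁻¹ := by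
    have hθne : θ ≠ 0 := ne_of_gt hθpos
    rw [div_eq_mul_inv, hs4]
    field_simp
    ring
  rw [hcoef]
  match_scalars <;> field_simp <;> ring
end
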